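/- The class of languages accepted by repetitive deterministic finite automata with translucent words (RDFAwtws) is properly contained in the class of languages accepted by repetitive nondeterministic finite automata with translucent words (RNFAwtws): every language accepted by an RDFAwtw is accepted by an RNFAwtw, and the language L_∨ = { w ∈ {a,b}* : ∃ n ≥ 0, |w|_a = n and |w|_b ∈ {n, 2n} } is accepted by an RNFAwtw but by no RDFAwtw. -/

import Mathlib

/-! Repetitive (non)deterministic finite automata with translucent words. -/

/-- Behavior of the automaton at the end-of-tape marker: halt accepting,
halt rejecting, or (in the repetitive case) continue in one of a set of states. -/
inductive EndBehavior (Q : Type) : Type where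
  | accept : EndBehavior Q
  | reject : EndBehavior Q
  | cont : Set Q → EndBehavior Q

/-- `InStar S w` means `w` belongs to the Kleene star `S*` of the set of words `S`. -/
def InStar {α : Type} (S : Set (List α)) (w : List α) : Prop :=
  ∃ l : List (List α), (∀ u ∈ l, u ∈ S) ∧ l.flatten = w

/-- A (repetitive) nondeterministic finite automaton with translucent words,
with state set `Q` over the alphabet `α`.  `tl q` is the set `τ(q)` of
translucent words of the state `q`, `delta` is the transition function and
`endB q` is the behavior at the end-of-tape marker.  The fields `tl_fin`,
`code_ne`, `prefix_code` and `tl_head` express that each `τ(q)` is finite,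
that `τ(q) ∪ Σ_q` is a prefix code (no empty word, and no member is a proper
prefix of another member), and that no word of `τ(q)` begins with a letter
readable in `q`. -/
structure RNFAwtw (α : Type) (Q : Type) : Type where
  init : Set Q
  tl : Q → Set (List α)
  delta : Q → α → Set Q
  endB : Q → EndBehavior Q
  tl_fin : ∀ q, (tl q).Finite
  code_ne : ∀ q, [] ∉ tl q
  prefix_code : ∀ q,
    ∀ u ∈ tl q ∪ {w | ∃ a, (delta q a).Nonempty ∧ w = [a]},
    ∀ v ∈ tl q ∪ {w | ∃ a, (delta q a).Nonempty ∧ w = [a]},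
      u <+: v → u = v
  tl_head : ∀ q, ∀ t ∈ tl q, ∀ a, (delta q a).Nonempty → ¬ [a] <+: t

/-- Configurations: a pair of a state and the remaining tape content, or one
of the two halting configurations. -/
inductive Conf (α Q : Type) : Type where
  | state : Q → List α → Conf α Q
  | accept : Conf α Q
  | reject : Conf α Q

/-- The single-step computation relation of an RNFAwtw. -/
inductive RNFAwtw.Step {α Q : Type} (A : RNFAwtw α Q) :
    Conf α Q → Conf α Q → Prop where
  | read {q q' : Q} {a : α} {u v : List α} :
      InStar (A.tl q) u → q' ∈ A.delta q a →
      RNFAwtw.Step A (Conf.state q (u ++ a :: v)) (Conf.state q' (u ++ v))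
  | stuck {q : Q} {a : α} {u v : List α} :
      InStar (A.tl q) u → A.delta q a = ∅ →
      (∀ t ∈ A.tl q, ¬ t <+: (a :: v)) →
      RNFAwtw.Step A (Conf.state q (u ++ a :: v)) Conf.reject
  | haltAccept {q : Q} {w : List α} :
      InStar (A.tl q) w → A.endB q = EndBehavior.accept →
      RNFAwtw.Step A (Conf.state q w) Conf.accept
  | haltReject {q : Q} {w : List α} :
      InStar (A.tl q) w → A.endB q = EndBehavior.reject →
      RNFAwtw.Step A (Conf.state q w) Conf.reject
  | goOn {q q' : Q} {w : List α} {S : Set Q} :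
      InStar (A.tl q) w → A.endB q = EndBehavior.cont S → q' ∈ S →
      RNFAwtw.Step A (Conf.state q w) (Conf.state q' w)

/-- `A` accepts the word `w`. -/
def RNFAwtw.Accepts {α Q : Type} (A : RNFAwtw α Q) (w : List α) : Prop :=
  ∃ q0 ∈ A.init, Relation.ReflTransGen A.Step (Conf.state q0 w) Conf.accept

/-- The language accepted by `A`. -/
def RNFAwtw.lang {α Q : Type} (A : RNFAwtw α Q) : Set (List α) :=
  { w | A.Accepts w }

/-- `A` is deterministic: one initial state, at most one transition per
state/letter pair, and at the end-of-tape marker the continuation (if any)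
is a single state. -/
def RNFAwtw.Deterministic {α Q : Type} (A : RNFAwtw α Q) : Prop :=
  (∃ q0, A.init = {q0}) ∧
  (∀ q a, (A.delta q a).Subsingleton) ∧
  (∀ q S, A.endB q = EndBehavior.cont S → ∃ q', S = {q'})

/-- `A` is non-repetitive: at the end-of-tape marker it always halts. -/
def RNFAwtw.NonRepetitive {α Q : Type} (A : RNFAwtw α Q) : Prop :=
  ∀ q S, A.endB q ≠ EndBehavior.cont S

/-- `L` is accepted by some repetitive NFAwtw (with a finite state set). -/
def AcceptedByRNFAwtw {α : Type} (L : Set (List α)) : Prop :=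
  ∃ (Q : Type) (_ : Finite Q) (A : RNFAwtw α Q), A.lang = L

/-- `L` is accepted by some repetitive DFAwtw. -/
def AcceptedByRDFAwtw {α : Type} (L : Set (List α)) : Prop :=
  ∃ (Q : Type) (_ : Finite Q) (A : RNFAwtw α Q), A.Deterministic ∧ A.lang = L

/-- `L` is accepted by some (non-repetitive) NFAwtw. -/
def AcceptedByNFAwtw {α : Type} (L : Set (List α)) : Prop :=
  ∃ (Q : Type) (_ : Finite Q) (A : RNFAwtw α Q), A.NonRepetitive ∧ A.lang = L

/-- `L` is accepted by some (non-repetitive) DFAwtw. -/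
def AcceptedByDFAwtw {α : Type} (L : Set (List α)) : Prop :=
  ∃ (Q : Type) (_ : Finite Q) (A : RNFAwtw α Q),
    A.NonRepetitive ∧ A.Deterministic ∧ A.lang = L

/-- The two-letter alphabet `{a, b}`. -/
inductive Letter : Type where
  | a : Letter
  | b : Letter
deriving DecidableEq

instance : Fintype Letter where
  elems := {Letter.a, Letter.b}
  complete := by intro x; cases x <;> simp

/-- `L_∨ = { w ∈ {a,b}* : ∃ n ≥ 0, |w|_a = n and |w|_b ∈ {n, 2n} }`. -/
def Lvee : Set (List Letter) :=
  { w | ∃ n : ℕ, w.count Letter.a = n ∧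
      (w.count Letter.b = n ∨ w.count Letter.b = 2 * n) }


/-! ### Basic auxiliary lemmas -/

namespace AuxWtw

open List

theorem instar_nil {α : Type} (S : Set (List α)) : InStar S [] := ⟨[], by simp⟩

theorem instar_single {α : Type} {S : Set (List α)} {w : List α} (h : w ∈ S) : InStar S w :=
  ⟨[w], by simp [h]⟩

theorem instar_append {α : Type} {S : Set (List α)} {u v : List α}
    (hu : InStar S u) (hv : InStar S v) : InStar S (u ++ v) := by
  obtain ⟨l1, h1, e1⟩ := hu
  obtain ⟨l2, h2, e2⟩ := hv
  exact ⟨l1 ++ l2, by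
    constructor
    · intro x hx; rcases List.mem_append.mp hx with h | h
      · exact h1 x h
      · exact h2 x h
    · simp [e1, e2]⟩

/-- A nonempty word in `S*` (with `[] ∉ S`) has a nonempty prefix in `S`. -/
theorem instar_head {α : Type} {S : Set (List α)} {w : List α}
    (hne : ([] : List α) ∉ S) (h : InStar S w) (hwne : w ≠ []) :
    ∃ t ∈ S, t ≠ [] ∧ t <+: w := by
  obtain ⟨l, hl, he⟩ := h
  cases l with
  | nil => simp at he; exact absurd he hwne
  | cons t l' =>
    refine ⟨t, hl t (by simp), ?_, ?_⟩
    · intro h0; rw [h0] at hl; exact hne (hl [] (by simp))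
    · rw [← he]; simp

/-- Prefix-code cancellation: if `u ∈ S*`, `u ++ z ∈ S*` then `z ∈ S*`. -/
theorem instar_drop {α : Type} {S : Set (List α)}
    (hne : ([] : List α) ∉ S)
    (hpc : ∀ u ∈ S, ∀ v ∈ S, u <+: v → u = v) :
    ∀ (l : List (List α)) (u w z : List α), (∀ x ∈ l, x ∈ S) → l.flatten = u →
      InStar S w → u ++ z = w → InStar S z := by
  intro l
  induction l with
  | nil =>
    intro u w z _ hfl hw he
    simp at hfl; subst hfl; simpa [← he] using hw
  | cons t l' ih =>
    intro u w z hl hfl hw he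
    obtain ⟨l2, hl2, he2⟩ := hw
    cases l2 with
    | nil =>
      exfalso
      simp at he2
      rw [he2] at he
      have : t = [] := by
        have hu : u = [] := (List.append_eq_nil_iff.mp he).1
        rw [← hfl] at hu
        simp at hu
        exact hu.1
      rw [this] at hl
      exact hne (hl [] (by simp))
    | cons t2 l2' =>
      have ht : t ∈ S := hl t (by simp)
      have ht2 : t2 ∈ S := hl2 t2 (by simp)
      have hpre1 : t <+: w := by
        rw [← he, ← hfl]; exact ⟨l'.flatten ++ z, by simp⟩
      have hpre2 : t2 <+: w := by rw [← he2]; exact ⟨l2'.flatten, by simp⟩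
      have htt : t = t2 := by
        rcases List.prefix_or_prefix_of_prefix hpre1 hpre2 with h | h
        · exact hpc t ht t2 ht2 h
        · exact (hpc t2 ht2 t ht h).symm
      subst htt
      have hcanc : l'.flatten ++ z = l2'.flatten := by
        have : t ++ (l'.flatten ++ z) = t ++ l2'.flatten := by
          rw [← List.append_assoc]
          rw [← he2] at he
          simpa [← hfl] using he
        exact List.append_cancel_left this
      exact ih l'.flatten (l2'.flatten) z (fun x hx => hl x (by simp [hx])) rfl
        ⟨l2', fun x hx => hl2 x (by simp [hx]), rfl⟩ hcanc

end AuxWtw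

namespace AuxWtw

open List

/-- The word `a^i b^j`. -/
def ab (i j : ℕ) : List Letter := List.replicate i Letter.a ++ List.replicate j Letter.b

theorem ab_length (i j : ℕ) : (ab i j).length = i + j := by simp [ab]

theorem count_ab_a (i j : ℕ) : (ab i j).count Letter.a = i := by
  simp [ab, List.count_append, List.count_replicate]

theorem count_ab_b (i j : ℕ) : (ab i j).count Letter.b = j := by
  simp [ab, List.count_append, List.count_replicate]

theorem ab_inj {i j i' j' : ℕ} (h : ab i j = ab i' j') : i = i' ∧ j = j' :=
  ⟨by rw [← count_ab_a i j, h, count_ab_a], by rw [← count_ab_b i j, h, count_ab_b]⟩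

theorem ab_zero_zero : ab 0 0 = [] := rfl

theorem take_ab (k i j : ℕ) : (ab i j).take k = ab (min k i) (min (k - i) j) := by
  rw [ab, List.take_append, List.take_replicate, List.take_replicate,
    List.length_replicate]
  rfl

theorem drop_ab (k i j : ℕ) : (ab i j).drop k = ab (i - k) (j - (k - i)) := by
  rw [ab, List.drop_append, List.drop_replicate, List.drop_replicate,
    List.length_replicate]
  rfl

theorem ab_add_left (s i j : ℕ) : ab (s + i) j = List.replicate s Letter.a ++ ab i j := by
  rw [ab, ab, List.replicate_add, List.append_assoc]

theorem ab_add_b (i r j : ℕ) : ab i (r + j) = ab i r ++ List.replicate j Letter.b := by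
  rw [ab, ab, List.replicate_add, List.append_assoc]

theorem ab_cons_a (i j : ℕ) : ab (i+1) j = Letter.a :: ab i j := by
  simp [ab, List.replicate_succ]

theorem ab_cons_b (j : ℕ) : ab 0 (j+1) = Letter.b :: ab 0 j := by
  simp [ab, List.replicate_succ]

/-- Prefixes of `a^i b^j`. -/
theorem prefix_ab {w : List Letter} {i j : ℕ} (h : w <+: ab i j) :
    ∃ s r, w = ab s r ∧ ((r = 0 ∧ s ≤ i) ∨ (s = i ∧ r ≤ j)) := by
  have hlen : w.length ≤ i + j := by simpa [ab_length] using h.length_le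
  have hw : w = (ab i j).take w.length := by
    obtain ⟨t, ht⟩ := h
    rw [← ht]; simp
  rw [take_ab] at hw
  by_cases hc : w.length ≤ i
  · refine ⟨w.length, 0, ?_, Or.inl ⟨rfl, hc⟩⟩
    conv_lhs => rw [hw]
    congr 1 <;> omega
  · refine ⟨i, w.length - i, ?_, Or.inr ⟨rfl, by omega⟩⟩
    conv_lhs => rw [hw]
    congr 1 <;> omega

/-- Decomposition of `a^i b^j` around an occurrence of a letter. -/
theorem decomp {u v : List Letter} {x : Letter} {i j : ℕ} (h : u ++ x :: v = ab i j) :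
    (x = Letter.a ∧ ∃ i0, i0 < i ∧ u = ab i0 0 ∧ v = ab (i - i0 - 1) j) ∨
    (x = Letter.b ∧ ∃ t, t < j ∧ u = ab i t ∧ v = ab 0 (j - t - 1)) := by
  obtain ⟨s, r, huv, hcase⟩ := prefix_ab ⟨x :: v, h⟩
  have hxv : x :: v = ab (i - (s + r)) (j - (s + r - i)) := by
    have h2 : x :: v = (ab i j).drop (ab s r).length := by
      rw [← h, huv]; simp
    rw [drop_ab, ab_length] at h2; exact h2
  have hlenxv := congrArg List.length hxv
  simp [ab_length] at hlenxv
  rcases hcase with ⟨hr, hs⟩ | ⟨hs, hr⟩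
  · by_cases hsi : s < i
    · left
      have h1 : ab (i - (s + r)) (j - (s + r - i)) = Letter.a :: ab (i - s - 1) j := by
        rw [show i - (s + r) = (i - s - 1) + 1 by omega, show j - (s + r - i) = j by omega,
          ab_cons_a]
      rw [h1] at hxv
      obtain ⟨hx, hv⟩ := List.cons.inj hxv
      refine ⟨hx, s, hsi, ?_, hv⟩
      rw [huv]; congr 1
    · right
      have hj : 0 < j := by omega
      have h1 : ab (i - (s + r)) (j - (s + r - i)) = Letter.b :: ab 0 (j - 1) := by
        rw [show i - (s + r) = 0 by omega, show j - (s + r - i) = (j - 1) + 1 by omega,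
          ab_cons_b]
      rw [h1] at hxv
      obtain ⟨hx, hv⟩ := List.cons.inj hxv
      refine ⟨hx, 0, hj, ?_, ?_⟩
      · rw [huv]; congr 1 <;> omega
      · rw [hv]; congr 1
  · right
    have hrj : r < j := by omega
    have h1 : ab (i - (s + r)) (j - (s + r - i)) = Letter.b :: ab 0 (j - r - 1) := by
      rw [show i - (s + r) = 0 by omega, show j - (s + r - i) = (j - r - 1) + 1 by omega,
        ab_cons_b]
    rw [h1] at hxv
    obtain ⟨hx, hv⟩ := List.cons.inj hxv
    refine ⟨hx, r, hrj, ?_, hv⟩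
    rw [huv]; congr 1 <;> omega

theorem decompA {u v : List Letter} {i j : ℕ} (h : u ++ Letter.a :: v = ab i j) :
    ∃ i0, i0 < i ∧ u = ab i0 0 ∧ v = ab (i - i0 - 1) j := by
  rcases decomp h with ⟨_, h'⟩ | ⟨hx, _⟩
  · exact h'
  · exact absurd hx (by simp)

theorem decompB {u v : List Letter} {i j : ℕ} (h : u ++ Letter.b :: v = ab i j) :
    ∃ t, t < j ∧ u = ab i t ∧ v = ab 0 (j - t - 1) := by
  rcases decomp h with ⟨hx, _⟩ | ⟨_, h'⟩
  · exact absurd hx (by simp)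
  · exact h'

theorem ab_prefix_mono {s t j : ℕ} (h : t ≤ j) : ab s t <+: ab s j := by
  refine ⟨List.replicate (j - t) Letter.b, ?_⟩
  conv_rhs => rw [show j = t + (j - t) by omega, ab_add_b]

/-- glue: `a^{i0} ++ a :: a^k b^j = a^{i0+k+1} b^j`. -/
theorem ab_glue_a (i0 k j : ℕ) : ab i0 0 ++ Letter.a :: ab k j = ab (i0 + k + 1) j := by
  rw [show i0 + k + 1 = i0 + (k + 1) by omega, ab_add_left, ab_cons_a]
  simp [ab]

/-- glue: `a^i b^t ++ b :: b^m = a^i b^{t+m+1}`. -/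
theorem ab_glue_b (i t m : ℕ) : ab i t ++ Letter.b :: ab 0 m = ab i (t + m + 1) := by
  rw [show t + m + 1 = t + (m + 1) by omega, ab_add_b, List.replicate_succ]
  simp [ab]

end AuxWtw

/-! ### Part 2: an RNFAwtw accepting `Lvee` -/

namespace AuxWtw

open List

inductive St : Type where
  | a1 | b1 | a2 | b2 | b2' | okk
  deriving DecidableEq

instance : Fintype St where
  elems := {St.a1, St.b1, St.a2, St.b2, St.b2', St.okk}
  complete := by intro x; cases x <;> simp

open St Letter

def tlS : St → Set (List Letter)
  | a1 => {[Letter.b]}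
  | a2 => {[Letter.b]}
  | b1 => {[Letter.a]}
  | b2 => {[Letter.a]}
  | b2' => {[Letter.a]}
  | okk => ∅

def deltaS : St → Letter → Set St
  | a1, Letter.a => {b1}
  | b1, Letter.b => {a1, okk}
  | a2, Letter.a => {b2}
  | b2, Letter.b => {b2'}
  | b2', Letter.b => {a2, okk}
  | _, _ => ∅

def endBS : St → EndBehavior St
  | okk => EndBehavior.accept
  | _ => EndBehavior.reject

def NA : RNFAwtw Letter St where
  init := {a1, a2, okk}
  tl := tlS
  delta := deltaS
  endB := endBS
  tl_fin := by
    intro q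
    cases q <;> simp [tlS] <;> exact Set.finite_singleton _
  code_ne := by
    intro q
    cases q <;> simp [tlS]
  prefix_code := by
    intro q u hu v hv huv
    have h1 : u.length = 1 := by
      rcases hu with hu | ⟨x, _, rfl⟩
      · cases q <;> simp [tlS] at hu <;> simp [hu]
      · rfl
    have h2 : v.length = 1 := by
      rcases hv with hv | ⟨x, _, rfl⟩
      · cases q <;> simp [tlS] at hv <;> simp [hv]
      · rfl
    exact huv.eq_of_length (by omega)
  tl_head := by
    intro q t ht x hx hpre
    cases q <;> cases x <;>
      simp [tlS] at ht <;>
      simp [deltaS, Set.Nonempty] at hx <;>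
      first
        | (subst ht; rcases hpre with ⟨s, hs⟩; simp [List.cons_eq_cons] at hs)
        | skip

def Inv : St → List Letter → Prop
  | a1, w => w.count Letter.b = w.count Letter.a
  | b1, w => w.count Letter.b = w.count Letter.a + 1
  | a2, w => w.count Letter.b = 2 * w.count Letter.a
  | b2, w => w.count Letter.b = 2 * w.count Letter.a + 2
  | b2', w => w.count Letter.b = 2 * w.count Letter.a + 1
  | okk, w => w = []

def Good : Conf Letter St → Prop
  | Conf.state q w => Inv q w
  | Conf.accept => True
  | Conf.reject => False

theorem instar_empty {α : Type} {w : List α} (h : InStar (∅ : Set (List α)) w) : w = [] := by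
  obtain ⟨l, hl, he⟩ := h
  cases l with
  | nil => exact he.symm
  | cons t l' => exact absurd (hl t (by simp)) (by simp)

theorem count_length (w : List Letter) : w.count Letter.a + w.count Letter.b = w.length := by
  induction w with
  | nil => simp
  | cons z w' ih => cases z <;> simp [List.count_cons] <;> omega

theorem good_invariant {c : Conf Letter St} (h : Relation.ReflTransGen NA.Step c Conf.accept) :
    Good c := by
  induction h using Relation.ReflTransGen.head_induction_on with
  | refl => trivial
  | head hstep htail ih =>
    cases hstep with
    | @read q q' x u v hin hq =>
      cases q <;> cases x <;> simp only [NA] at hq <;> simp [deltaS] at hq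
      · -- a1, a : q' = b1
        subst hq
        simp [Good, Inv, List.count_append, List.count_cons] at ih ⊢
        omega
      · -- b1, b : q' ∈ {a1, okk}
        rcases hq with rfl | rfl
        · simp [Good, Inv, List.count_append, List.count_cons] at ih ⊢
          omega
        · simp [Good, Inv] at ih
          obtain ⟨h1, h2⟩ := ih
          subst h1; subst h2
          simp [Good, Inv, List.count_cons]
      · -- a2, a : q' = b2
        subst hq
        simp [Good, Inv, List.count_append, List.count_cons] at ih ⊢
        omega
      · -- b2, b : q' = b2'
        subst hq
        simp [Good, Inv, List.count_append, List.count_cons] at ih ⊢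
        omega
      · -- b2', b : q' ∈ {a2, okk}
        rcases hq with rfl | rfl
        · simp [Good, Inv, List.count_append, List.count_cons] at ih ⊢
          omega
        · simp [Good, Inv] at ih
          obtain ⟨h1, h2⟩ := ih
          subst h1; subst h2
          simp [Good, Inv, List.count_cons]
    | @stuck q x u v hin hd hnp => exact ih.elim
    | @haltAccept q w hin he =>
      cases q <;> simp only [NA] at he <;> simp [endBS] at he
      simp only [NA] at hin
      simp [Good, Inv, instar_empty (by simpa [tlS] using hin)]
    | @haltReject q w hin he => exact ih.elim
    | @goOn q q' w S hin he hq =>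
      cases q <;> simp only [NA] at he <;> simp [endBS] at he

theorem flatten_singletons {α : Type} (u : List α) : (u.map (fun z => [z])).flatten = u := by
  induction u <;> simp_all

theorem instar_all_eq {u : List Letter} {c : Letter} (h : ∀ z ∈ u, z = c) :
    InStar ({[c]} : Set (List Letter)) u := by
  refine ⟨u.map (fun z => [z]), ?_, flatten_singletons u⟩
  intro x hx
  simp at hx
  obtain ⟨z, hz, rfl⟩ := hx
  simp [h z hz]

theorem extract {w : List Letter} {x : Letter} (h : 1 ≤ w.count x) :
    ∃ u v, w = u ++ x :: v ∧ ∀ y ∈ u, y ≠ x := by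
  induction w with
  | nil => simp at h
  | cons z w' ih =>
    by_cases hz : z = x
    · exact ⟨[], w', by simp [hz], by simp⟩
    · have h' : 1 ≤ w'.count x := by
        rw [List.count_cons] at h
        simpa [hz] using h
      obtain ⟨u, v, rfl, hu⟩ := ih h'
      exact ⟨z :: u, v, rfl, by
        intro y hy
        rcases List.mem_cons.mp hy with rfl | hy'
        · exact hz
        · exact hu y hy'⟩

theorem other_eq {z x : Letter} (h : z ≠ x) : z = (match x with | Letter.a => Letter.b | Letter.b => Letter.a) := by
  cases z <;> cases x <;> first | rfl | exact absurd rfl h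

theorem loop1 : ∀ n, ∀ w : List Letter, w.count Letter.a = n + 1 → w.count Letter.b = n + 1 →
    Relation.ReflTransGen NA.Step (Conf.state St.a1 w) Conf.accept := by
  intro n
  induction n with
  | zero =>
    intro w ha hb
    obtain ⟨u, v, rfl, hu⟩ := extract (x := Letter.a) (w := w) (by omega)
    have s1 : NA.Step (Conf.state St.a1 (u ++ Letter.a :: v)) (Conf.state St.b1 (u ++ v)) := by
      refine RNFAwtw.Step.read ?_ (by simp [NA, deltaS])
      exact instar_all_eq (fun z hz => other_eq (hu z hz))
    have hb' : (u ++ v).count Letter.b = 1 := by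
      simp [List.count_append, List.count_cons] at hb ⊢; omega
    have ha' : (u ++ v).count Letter.a = 0 := by
      simp [List.count_append, List.count_cons] at ha ⊢; omega
    obtain ⟨u', v', he', hu'⟩ := extract (x := Letter.b) (w := u ++ v) (by omega)
    rw [he'] at s1
    have s2 : NA.Step (Conf.state St.b1 (u' ++ Letter.b :: v')) (Conf.state St.okk (u' ++ v')) := by
      refine RNFAwtw.Step.read ?_ (by simp [NA, deltaS])
      exact instar_all_eq (fun z hz => other_eq (hu' z hz))
    have hnil : u' ++ v' = [] := by
      rw [he'] at ha' hb'
      have ha2 : (u' ++ v').count Letter.a = 0 := by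
        simp [List.count_append, List.count_cons] at ha' ⊢; omega
      have hb2 : (u' ++ v').count Letter.b = 0 := by
        simp [List.count_append, List.count_cons] at hb' ⊢; omega
      have hl := count_length (u' ++ v')
      rw [ha2, hb2] at hl
      exact List.eq_nil_of_length_eq_zero (by omega)
    have s3 : NA.Step (Conf.state St.okk (u' ++ v')) Conf.accept := by
      rw [hnil]
      exact RNFAwtw.Step.haltAccept (instar_nil _) rfl
    exact Relation.ReflTransGen.head s1 (Relation.ReflTransGen.head s2
      (Relation.ReflTransGen.single s3))
  | succ m ih =>
    intro w ha hb
    obtain ⟨u, v, rfl, hu⟩ := extract (x := Letter.a) (w := w) (by omega)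
    have s1 : NA.Step (Conf.state St.a1 (u ++ Letter.a :: v)) (Conf.state St.b1 (u ++ v)) := by
      refine RNFAwtw.Step.read ?_ (by simp [NA, deltaS])
      exact instar_all_eq (fun z hz => other_eq (hu z hz))
    have hb' : (u ++ v).count Letter.b = m + 2 := by
      simp [List.count_append, List.count_cons] at hb ⊢; omega
    have ha' : (u ++ v).count Letter.a = m + 1 := by
      simp [List.count_append, List.count_cons] at ha ⊢; omega
    obtain ⟨u', v', he', hu'⟩ := extract (x := Letter.b) (w := u ++ v) (by omega)
    rw [he'] at s1
    have s2 : NA.Step (Conf.state St.b1 (u' ++ Letter.b :: v')) (Conf.state St.a1 (u' ++ v')) := by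
      refine RNFAwtw.Step.read ?_ (by simp [NA, deltaS])
      exact instar_all_eq (fun z hz => other_eq (hu' z hz))
    rw [he'] at ha' hb'
    have ha'' : (u' ++ v').count Letter.a = m + 1 := by
      simp [List.count_append, List.count_cons] at ha' ⊢; omega
    have hb'' : (u' ++ v').count Letter.b = m + 1 := by
      simp [List.count_append, List.count_cons] at hb' ⊢; omega
    exact Relation.ReflTransGen.head s1 (Relation.ReflTransGen.head s2 (ih _ ha'' hb''))

theorem loop2 : ∀ n, ∀ w : List Letter, w.count Letter.a = n + 1 → w.count Letter.b = 2 * (n + 1) →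
    Relation.ReflTransGen NA.Step (Conf.state St.a2 w) Conf.accept := by
  intro n
  induction n with
  | zero =>
    intro w ha hb
    obtain ⟨u, v, rfl, hu⟩ := extract (x := Letter.a) (w := w) (by omega)
    have s1 : NA.Step (Conf.state St.a2 (u ++ Letter.a :: v)) (Conf.state St.b2 (u ++ v)) := by
      refine RNFAwtw.Step.read ?_ (by simp [NA, deltaS])
      exact instar_all_eq (fun z hz => other_eq (hu z hz))
    have hb' : (u ++ v).count Letter.b = 2 := by
      simp [List.count_append, List.count_cons] at hb ⊢; omega
    have ha' : (u ++ v).count Letter.a = 0 := by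
      simp [List.count_append, List.count_cons] at ha ⊢; omega
    obtain ⟨u', v', he', hu'⟩ := extract (x := Letter.b) (w := u ++ v) (by omega)
    rw [he'] at s1 ha' hb'
    have s2 : NA.Step (Conf.state St.b2 (u' ++ Letter.b :: v')) (Conf.state St.b2' (u' ++ v')) := by
      refine RNFAwtw.Step.read ?_ (by simp [NA, deltaS])
      exact instar_all_eq (fun z hz => other_eq (hu' z hz))
    have ha2 : (u' ++ v').count Letter.a = 0 := by
      simp [List.count_append, List.count_cons] at ha' ⊢; omega
    have hb2 : (u' ++ v').count Letter.b = 1 := by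
      simp [List.count_append, List.count_cons] at hb' ⊢; omega
    obtain ⟨u'', v'', he'', hu''⟩ := extract (x := Letter.b) (w := u' ++ v') (by omega)
    rw [he''] at s2 ha2 hb2
    have s3 : NA.Step (Conf.state St.b2' (u'' ++ Letter.b :: v'')) (Conf.state St.okk (u'' ++ v'')) := by
      refine RNFAwtw.Step.read ?_ (by simp [NA, deltaS])
      exact instar_all_eq (fun z hz => other_eq (hu'' z hz))
    have hnil : u'' ++ v'' = [] := by
      have ha3 : (u'' ++ v'').count Letter.a = 0 := by
        simp [List.count_append, List.count_cons] at ha2 ⊢; omega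
      have hb3 : (u'' ++ v'').count Letter.b = 0 := by
        simp [List.count_append, List.count_cons] at hb2 ⊢; omega
      have hl := count_length (u'' ++ v'')
      rw [ha3, hb3] at hl
      exact List.eq_nil_of_length_eq_zero (by omega)
    have s4 : NA.Step (Conf.state St.okk (u'' ++ v'')) Conf.accept := by
      rw [hnil]
      exact RNFAwtw.Step.haltAccept (instar_nil _) rfl
    exact Relation.ReflTransGen.head s1 (Relation.ReflTransGen.head s2
      (Relation.ReflTransGen.head s3 (Relation.ReflTransGen.single s4)))
  | succ m ih =>
    intro w ha hb
    obtain ⟨u, v, rfl, hu⟩ := extract (x := Letter.a) (w := w) (by omega)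
    have s1 : NA.Step (Conf.state St.a2 (u ++ Letter.a :: v)) (Conf.state St.b2 (u ++ v)) := by
      refine RNFAwtw.Step.read ?_ (by simp [NA, deltaS])
      exact instar_all_eq (fun z hz => other_eq (hu z hz))
    have hb' : (u ++ v).count Letter.b = 2 * (m + 1) + 2 := by
      simp [List.count_append, List.count_cons] at hb ⊢; omega
    have ha' : (u ++ v).count Letter.a = m + 1 := by
      simp [List.count_append, List.count_cons] at ha ⊢; omega
    obtain ⟨u', v', he', hu'⟩ := extract (x := Letter.b) (w := u ++ v) (by omega)
    rw [he'] at s1 ha' hb'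
    have s2 : NA.Step (Conf.state St.b2 (u' ++ Letter.b :: v')) (Conf.state St.b2' (u' ++ v')) := by
      refine RNFAwtw.Step.read ?_ (by simp [NA, deltaS])
      exact instar_all_eq (fun z hz => other_eq (hu' z hz))
    have ha2 : (u' ++ v').count Letter.a = m + 1 := by
      simp [List.count_append, List.count_cons] at ha' ⊢; omega
    have hb2 : (u' ++ v').count Letter.b = 2 * (m + 1) + 1 := by
      simp [List.count_append, List.count_cons] at hb' ⊢; omega
    obtain ⟨u'', v'', he'', hu''⟩ := extract (x := Letter.b) (w := u' ++ v') (by omega)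
    rw [he''] at s2 ha2 hb2
    have s3 : NA.Step (Conf.state St.b2' (u'' ++ Letter.b :: v'')) (Conf.state St.a2 (u'' ++ v'')) := by
      refine RNFAwtw.Step.read ?_ (by simp [NA, deltaS])
      exact instar_all_eq (fun z hz => other_eq (hu'' z hz))
    have ha3 : (u'' ++ v'').count Letter.a = m + 1 := by
      simp [List.count_append, List.count_cons] at ha2 ⊢; omega
    have hb3 : (u'' ++ v'').count Letter.b = 2 * (m + 1) := by
      simp [List.count_append, List.count_cons] at hb2 ⊢; omega
    exact Relation.ReflTransGen.head s1 (Relation.ReflTransGen.head s2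
      (Relation.ReflTransGen.head s3 (ih _ ha3 hb3)))

theorem accepts_nil : NA.Accepts [] := by
  refine ⟨St.okk, by simp [NA], ?_⟩
  exact Relation.ReflTransGen.single (RNFAwtw.Step.haltAccept (instar_nil _) rfl)

theorem NA_lang : NA.lang = Lvee := by
  ext w
  constructor
  · rintro ⟨q0, hq0, rtg⟩
    have hg := good_invariant rtg
    simp [NA] at hq0
    rcases hq0 with rfl | rfl | rfl
    · exact ⟨w.count Letter.a, rfl, Or.inl hg⟩
    · exact ⟨w.count Letter.a, rfl, Or.inr hg⟩
    · simp [Good, Inv] at hg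
      subst hg
      exact ⟨0, by simp⟩
  · rintro ⟨n, ha, hb | hb⟩
    · cases n with
      | zero =>
        have hl := count_length w
        rw [ha, hb] at hl
        have : w = [] := List.eq_nil_of_length_eq_zero (by omega)
        subst this
        exact accepts_nil
      | succ m =>
        exact ⟨St.a1, by simp [NA], loop1 m w ha hb⟩
    · cases n with
      | zero =>
        have hl := count_length w
        rw [ha] at hl
        rw [hb] at hl
        have : w = [] := List.eq_nil_of_length_eq_zero (by omega)
        subst this
        exact accepts_nil
      | succ m =>
        exact ⟨St.a2, by simp [NA], loop2 m w ha hb⟩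

theorem part2 : AcceptedByRNFAwtw Lvee := ⟨St, Finite.of_fintype St, NA, NA_lang⟩

end AuxWtw

/-! ### Part 3: no RDFAwtw accepts `Lvee`. Arithmetic structure of `T*` on `a^i b^j`. -/

namespace AuxWtw

open List

/-- `x` is a sum of elements of `S`. -/
def NSum (S : Set ℕ) (x : ℕ) : Prop := ∃ l : List ℕ, (∀ s ∈ l, s ∈ S) ∧ l.sum = x

theorem nsum_zero (S : Set ℕ) : NSum S 0 := ⟨[], by simp⟩

theorem nsum_cons {S : Set ℕ} {x g : ℕ} (h : NSum S x) (hg : g ∈ S) : NSum S (x + g) := by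
  obtain ⟨l, hl, hs⟩ := h
  refine ⟨g :: l, ?_, by simp [hs]; omega⟩
  intro s hs'
  rcases List.mem_cons.mp hs' with rfl | hs'
  · exact hg
  · exact hl s hs'

theorem nsum_add_mul {S : Set ℕ} {x g : ℕ} (h : NSum S x) (hg : g ∈ S) (m : ℕ) :
    NSum S (x + m * g) := by
  induction m with
  | zero => simpa using h
  | succ k ih =>
    have := nsum_cons ih hg
    have he : x + k * g + g = x + (k + 1) * g := by ring
    rwa [he] at this

theorem nsum_pos_nonempty {S : Set ℕ} {x : ℕ} (h : NSum S x) (hx : 1 ≤ x) : S.Nonempty := by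
  obtain ⟨l, hl, hs⟩ := h
  cases l with
  | nil => simp at hs; omega
  | cons s l' => exact ⟨s, hl s (by simp)⟩

section Automaton

variable {Q : Type} [Fintype Q] (A : RNFAwtw Letter Q)

/-- Lengths of pure-`a` translucent words of `q`. -/
def SA (q : Q) : Set ℕ := {s | 1 ≤ s ∧ ab s 0 ∈ A.tl q}

/-- Lengths of pure-`b` translucent words of `q`. -/
def SB (q : Q) : Set ℕ := {r | 1 ≤ r ∧ ab 0 r ∈ A.tl q}

theorem ab_j0 (s : ℕ) : ab s 0 = List.replicate s Letter.a := by simp [ab]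
theorem ab_i0 (r : ℕ) : ab 0 r = List.replicate r Letter.b := by simp [ab]

theorem ab_glue3 (i1 s r t2 : ℕ) :
    ab i1 0 ++ (ab s r ++ ab 0 t2) = ab (i1 + s) (r + t2) := by
  rw [ab_add_left, ab_add_b, ab_j0, ab_i0]

theorem nsum_instar_a {q : Q} {x : ℕ} (h : NSum (SA A q) x) : InStar (A.tl q) (ab x 0) := by
  obtain ⟨l, hl, hs⟩ := h
  induction l generalizing x with
  | nil => simp at hs; subst hs; exact instar_nil _
  | cons s l' ih =>
    simp at hs
    have h1 : ab x 0 = ab s 0 ++ ab l'.sum 0 := by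
      rw [ab_j0, ab_j0, ab_j0, ← List.replicate_add]
      congr 1
      omega
    rw [h1]
    exact instar_append (instar_single (hl s (by simp)).2)
      (ih (fun z hz => hl z (by simp [hz])) rfl)

theorem nsum_instar_b {q : Q} {x : ℕ} (h : NSum (SB A q) x) : InStar (A.tl q) (ab 0 x) := by
  obtain ⟨l, hl, hs⟩ := h
  induction l generalizing x with
  | nil => simp at hs; subst hs; exact instar_nil _
  | cons s l' ih =>
    simp at hs
    have h1 : ab 0 x = ab 0 s ++ ab 0 l'.sum := by
      rw [ab_i0, ab_i0, ab_i0, ← List.replicate_add]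
      congr 1
      omega
    rw [h1]
    exact instar_append (instar_single (hl s (by simp)).2)
      (ih (fun z hz => hl z (by simp [hz])) rfl)

/-- Exclusive version of `prefix_ab`. -/
theorem prefix_ab' {w : List Letter} {i j : ℕ} (h : w <+: ab i j) :
    ∃ s r, w = ab s r ∧ ((r = 0 ∧ s ≤ i) ∨ (1 ≤ r ∧ s = i ∧ r ≤ j)) := by
  obtain ⟨s, r, rfl, hc⟩ := prefix_ab h
  rcases Nat.eq_zero_or_pos r with hr | hr
  · exact ⟨s, r, rfl, Or.inl ⟨hr, by rcases hc with ⟨_, h⟩ | ⟨h, _⟩ <;> omega⟩⟩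
  · rcases hc with ⟨h0, _⟩ | ⟨hs, hj⟩
    · omega
    · exact ⟨s, r, rfl, Or.inr ⟨hr, hs, hj⟩⟩

/-- Characterization of membership of `a^i b^t` in `(τ(q))*`. -/
theorem instar_ab_iff (q : Q) (i t : ℕ) :
    InStar (A.tl q) (ab i t) ↔
      ∃ i1 s r t2, i = i1 + s ∧ t = r + t2 ∧ NSum (SA A q) i1 ∧ NSum (SB A q) t2 ∧
        ((s = 0 ∧ r = 0) ∨ ab s r ∈ A.tl q) := by
  constructor
  · rintro ⟨l, hl, he⟩
    induction l generalizing i t with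
    | nil =>
      simp at he
      have hlen := congrArg List.length he
      simp [ab_length] at hlen
      refine ⟨0, 0, 0, 0, by omega, by omega, nsum_zero _, nsum_zero _, Or.inl ⟨rfl, rfl⟩⟩
    | cons w l' ih =>
      have hw : w ∈ A.tl q := hl w (by simp)
      have hwne : w ≠ [] := by rintro rfl; exact A.code_ne q hw
      simp at he
      have hpre : w <+: ab i t := ⟨l'.flatten, he⟩
      obtain ⟨s', r', rfl, hc⟩ := prefix_ab' hpre
      have hrest : l'.flatten = (ab i t).drop (s' + r') := by
        rw [← he]; simp [ab_length]
      rw [drop_ab] at hrest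
      rcases hc with ⟨hr0, hsi⟩ | ⟨hr1, hsi, hrt⟩
      · -- pure-a word of length s' ≥ 1
        have hs1 : 1 ≤ s' := by
          rcases Nat.eq_zero_or_pos s' with h0 | h1
          · exfalso; apply hwne; rw [h0, hr0]; rfl
          · exact h1
        have hrest' : l'.flatten = ab (i - s') t := by
          rw [hrest]; congr 1 <;> omega
        obtain ⟨i1, s, r, t2, h1, h2, hA, hB, hM⟩ :=
          ih (i - s') t (fun z hz => hl z (List.mem_cons_of_mem _ hz)) hrest'
        refine ⟨i1 + s', s, r, t2, by omega, h2, ?_, hB, hM⟩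
        exact nsum_cons hA ⟨hs1, by rw [← hr0]; exact hw⟩
      · -- word ab i r' with r' ≥ 1
        have hrest' : l'.flatten = ab 0 (t - r') := by
          rw [hrest]; congr 1 <;> omega
        obtain ⟨i1, s, r, t2, h1, h2, hA, hB, hM⟩ :=
          ih 0 (t - r') (fun z hz => hl z (List.mem_cons_of_mem _ hz)) hrest'
        have hi1 : i1 = 0 := by omega
        have hs : s = 0 := by omega
        rcases hM with ⟨_, hr⟩ | hM
        · refine ⟨0, i, r', t2, by omega, by omega, nsum_zero _, hB, Or.inr (by rw [← hsi]; exact hw)⟩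
        · -- middle word is `ab s r` with `s = 0`: a pure-b word
          have hr1' : 1 ≤ r := by
            rcases Nat.eq_zero_or_pos r with h0 | h1
            · exfalso
              apply A.code_ne q
              have : ab s r = [] := by rw [hs, h0]; rfl
              rwa [this] at hM
            · exact h1
          have hrSB : r ∈ SB A q := ⟨hr1', by rw [← hs]; exact hM⟩
          refine ⟨0, i, r', r + t2, by omega, by omega, nsum_zero _, ?_, Or.inr (by rw [← hsi]; exact hw)⟩
          have := nsum_cons hB hrSB
          rwa [Nat.add_comm] at this
  · rintro ⟨i1, s, r, t2, rfl, rfl, hA, hB, hM⟩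
    rw [← ab_glue3]
    refine instar_append (nsum_instar_a A hA) (instar_append ?_ (nsum_instar_b A hB))
    rcases hM with ⟨rfl, rfl⟩ | hM
    · exact instar_nil _
    · exact instar_single hM

end Automaton

end AuxWtw

namespace AuxWtw

open List

section Automaton

variable {Q : Type} [Fintype Q] (A : RNFAwtw Letter Q)

/-- Maximal length of a translucent word. -/
noncomputable def maxLen : ℕ :=
  Finset.univ.sup (fun q : Q => (A.tl_fin q).toFinset.sup List.length)

theorem len_le_maxLen {q : Q} {w : List Letter} (hw : w ∈ A.tl q) : w.length ≤ maxLen A := by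
  refine le_trans ?_ (Finset.le_sup (Finset.mem_univ q))
  exact Finset.le_sup ((A.tl_fin q).mem_toFinset.mpr hw)

open Classical in
noncomputable def gA (q : Q) : ℕ := if h : (SA A q).Nonempty then h.choose else 1

open Classical in
noncomputable def gB (q : Q) : ℕ := if h : (SB A q).Nonempty then h.choose else 1

theorem gA_mem {q : Q} (h : (SA A q).Nonempty) : gA A q ∈ SA A q := by
  classical
  rw [gA, dif_pos h]; exact h.choose_spec

theorem gB_mem {q : Q} (h : (SB A q).Nonempty) : gB A q ∈ SB A q := by
  classical
  rw [gB, dif_pos h]; exact h.choose_spec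

theorem gA_pos (q : Q) : 1 ≤ gA A q := by
  by_cases h : (SA A q).Nonempty
  · exact (gA_mem A h).1
  · classical
    rw [gA, dif_neg h]

theorem gB_pos (q : Q) : 1 ≤ gB A q := by
  by_cases h : (SB A q).Nonempty
  · exact (gB_mem A h).1
  · classical
    rw [gB, dif_neg h]

/-- The common shift period. -/
noncomputable def PP : ℕ := ∏ q : Q, (gA A q * gB A q)

theorem PP_pos : 1 ≤ PP A := by
  rw [PP]
  exact Finset.one_le_prod' (fun q _ => Nat.one_le_iff_ne_zero.mpr
    (Nat.mul_ne_zero (by have := gA_pos A q; omega) (by have := gB_pos A q; omega)))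

theorem gA_dvd_PP (q : Q) : gA A q ∣ PP A :=
  dvd_trans (dvd_mul_right _ _) (Finset.dvd_prod_of_mem _ (Finset.mem_univ q))

theorem gB_dvd_PP (q : Q) : gB A q ∣ PP A :=
  dvd_trans (dvd_mul_left _ _) (Finset.dvd_prod_of_mem _ (Finset.mem_univ q))

/-- The threshold. -/
noncomputable def T0v : ℕ := maxLen A + 1

theorem instar_shift_a {q : Q} {i t Δ : ℕ} (h : InStar (A.tl q) (ab i t))
    (hi : T0v A ≤ i) (hd : PP A ∣ Δ) : InStar (A.tl q) (ab (i + Δ) t) := by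
  obtain ⟨i1, s, r, t2, h1, h2, hA, hB, hM⟩ := (instar_ab_iff A q i t).mp h
  have hs : s ≤ maxLen A := by
    rcases hM with ⟨rfl, _⟩ | hM
    · omega
    · have := len_le_maxLen A hM
      rw [ab_length] at this
      omega
  have hi1 : 1 ≤ i1 := by
    have := hi
    rw [T0v] at this
    omega
  have hne : (SA A q).Nonempty := nsum_pos_nonempty hA hi1
  have hg : gA A q ∈ SA A q := gA_mem A hne
  obtain ⟨m, hm⟩ : gA A q ∣ Δ := dvd_trans (gA_dvd_PP A q) hd
  refine (instar_ab_iff A q (i + Δ) t).mpr ⟨i1 + Δ, s, r, t2, by omega, h2, ?_, hB, hM⟩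
  have := nsum_add_mul hA hg m
  rwa [show i1 + m * gA A q = i1 + Δ by rw [hm]; ring] at this

theorem instar_shift_b {q : Q} {i t Δ : ℕ} (h : InStar (A.tl q) (ab i t))
    (ht : T0v A ≤ t) (hd : PP A ∣ Δ) : InStar (A.tl q) (ab i (t + Δ)) := by
  obtain ⟨i1, s, r, t2, h1, h2, hA, hB, hM⟩ := (instar_ab_iff A q i t).mp h
  have hr : r ≤ maxLen A := by
    rcases hM with ⟨_, rfl⟩ | hM
    · omega
    · have := len_le_maxLen A hM
      rw [ab_length] at this
      omega
  have ht2 : 1 ≤ t2 := by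
    have := ht
    rw [T0v] at this
    omega
  have hne : (SB A q).Nonempty := nsum_pos_nonempty hB ht2
  have hg : gB A q ∈ SB A q := gB_mem A hne
  obtain ⟨m, hm⟩ : gB A q ∣ Δ := dvd_trans (gB_dvd_PP A q) hd
  refine (instar_ab_iff A q i (t + Δ)).mpr ⟨i1, s, r, t2 + Δ, h1, by omega, hA, ?_, hM⟩
  have := nsum_add_mul hB hg m
  rwa [show t2 + m * gB A q = t2 + Δ by rw [hm]; ring] at this

theorem instar_shift {q : Q} {i j Δi Δj : ℕ} (h : InStar (A.tl q) (ab i j))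
    (hi : Δi = 0 ∨ T0v A ≤ i) (hj : Δj = 0 ∨ T0v A ≤ j)
    (hdi : PP A ∣ Δi) (hdj : PP A ∣ Δj) : InStar (A.tl q) (ab (i + Δi) (j + Δj)) := by
  have h1 : InStar (A.tl q) (ab (i + Δi) j) := by
    rcases hi with rfl | hi
    · simpa using h
    · exact instar_shift_a A h hi hdi
  rcases hj with rfl | hj
  · simpa using h1
  · exact instar_shift_b A h1 hj hdj

end Automaton

end AuxWtw

namespace AuxWtw

open List

section Automaton

variable {Q : Type} [Fintype Q] (A : RNFAwtw Letter Q)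

theorem ab_glue_a0 (i0 k j : ℕ) : ab i0 0 ++ ab k j = ab (i0 + k) j := by
  rw [ab_add_left, ab_j0]

theorem ab_glue_b0 (i t m : ℕ) : ab i t ++ ab 0 m = ab i (t + m) := by
  rw [ab_add_b, ab_i0]

/-- Inversion for steps out of a state configuration. -/
theorem step_inv {q : Q} {w : List Letter} {c : Conf Letter Q}
    (h : A.Step (Conf.state q w) c) :
    (∃ q' x u v, InStar (A.tl q) u ∧ q' ∈ A.delta q x ∧ w = u ++ x :: v ∧
      c = Conf.state q' (u ++ v)) ∨
    (∃ x u v, InStar (A.tl q) u ∧ A.delta q x = ∅ ∧ (∀ t ∈ A.tl q, ¬ t <+: (x :: v)) ∧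
      w = u ++ x :: v ∧ c = Conf.reject) ∨
    (InStar (A.tl q) w ∧ A.endB q = EndBehavior.accept ∧ c = Conf.accept) ∨
    (InStar (A.tl q) w ∧ A.endB q = EndBehavior.reject ∧ c = Conf.reject) ∨
    (∃ q' S, InStar (A.tl q) w ∧ A.endB q = EndBehavior.cont S ∧ q' ∈ S ∧
      c = Conf.state q' w) := by
  cases h with
  | read hin hq => exact Or.inl ⟨_, _, _, _, hin, hq, rfl, rfl⟩
  | stuck hin hd hnp => exact Or.inr (Or.inl ⟨_, _, _, hin, hd, hnp, rfl, rfl⟩)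
  | haltAccept hin he => exact Or.inr (Or.inr (Or.inl ⟨hin, he, rfl⟩))
  | haltReject hin he => exact Or.inr (Or.inr (Or.inr (Or.inl ⟨hin, he, rfl⟩)))
  | goOn hin he hq => exact Or.inr (Or.inr (Or.inr (Or.inr ⟨_, _, hin, he, hq, rfl⟩)))

/-- No word of `T*` starts with a readable letter. -/
theorem not_instar_cons {q : Q} {x : Letter} {v : List Letter}
    (hx : (A.delta q x).Nonempty) (h : InStar (A.tl q) (x :: v)) : False := by
  obtain ⟨t0, ht0, hne, hpre⟩ := instar_head (A.code_ne q) h (List.cons_ne_nil _ _)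
  cases t0 with
  | nil => exact hne rfl
  | cons z t0' =>
    obtain ⟨hz, -⟩ := List.cons_prefix_cons.mp hpre
    rw [← hz] at hx
    exact A.tl_head q _ ht0 z hx ⟨t0', rfl⟩

theorem instar_drop' {q : Q} {u w z : List Letter} (hu : InStar (A.tl q) u)
    (hw : InStar (A.tl q) w) (he : u ++ z = w) : InStar (A.tl q) z := by
  obtain ⟨l, hl, hfl⟩ := hu
  exact instar_drop (A.code_ne q)
    (fun x hx y hy hxy => A.prefix_code q x (Set.mem_union_left _ hx)
      y (Set.mem_union_left _ hy) hxy) l u w z hl hfl hw he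

/-- Case analysis of the possible successors of a configuration `(q, a^i b^j)`. -/
theorem step_cases {q : Q} {i j : ℕ} {c : Conf Letter Q}
    (h : A.Step (Conf.state q (ab i j)) c) :
    c = Conf.accept ∨ c = Conf.reject ∨
    (∃ q', c = Conf.state q' (ab (i - 1) j) ∧ 1 ≤ i) ∨
    (∃ q', c = Conf.state q' (ab i (j - 1)) ∧ 1 ≤ j) ∨
    (∃ q', c = Conf.state q' (ab i j)) := by
  rcases step_inv A h with
    ⟨q', x, u, v, hin, hq, hw, rfl⟩ | ⟨x, u, v, hin, hd, hnp, hw, rfl⟩ |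
    ⟨hin, he, rfl⟩ | ⟨hin, he, rfl⟩ | ⟨q', S, hin, he, hq, rfl⟩
  · rcases decomp hw.symm with ⟨rfl, i0, hi0, rfl, rfl⟩ | ⟨rfl, t, ht, rfl, rfl⟩
    · refine Or.inr (Or.inr (Or.inl ⟨q', ?_, by omega⟩))
      rw [ab_glue_a0]
      congr 2
      omega
    · refine Or.inr (Or.inr (Or.inr (Or.inl ⟨q', ?_, by omega⟩)))
      rw [ab_glue_b0]
      congr 2
      omega
  · exact Or.inr (Or.inl rfl)
  · exact Or.inl rfl
  · exact Or.inr (Or.inl rfl)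
  · exact Or.inr (Or.inr (Or.inr (Or.inr ⟨q', rfl⟩)))

/-- Forward shift transfer of a single step. -/
theorem step_shift {q : Q} {i j Δi Δj : ℕ} {c : Conf Letter Q}
    (hdi : PP A ∣ Δi) (hdj : PP A ∣ Δj)
    (hi : Δi = 0 ∨ T0v A ≤ i) (hj : Δj = 0 ∨ T0v A ≤ j)
    (h : A.Step (Conf.state q (ab i j)) c) :
    (c = Conf.accept ∧ A.Step (Conf.state q (ab (i + Δi) (j + Δj))) Conf.accept) ∨
    (∃ q' i' j', c = Conf.state q' (ab i' j') ∧
      A.Step (Conf.state q (ab (i + Δi) (j + Δj))) (Conf.state q' (ab (i' + Δi) (j' + Δj)))) ∨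
    c = Conf.reject := by
  rcases step_inv A h with
    ⟨q', x, u, v, hin, hq, hw, rfl⟩ | ⟨x, u, v, hin, hd, hnp, hw, rfl⟩ |
    ⟨hin, he, rfl⟩ | ⟨hin, he, rfl⟩ | ⟨q', S, hin, he, hq, rfl⟩
  · rcases decomp hw.symm with ⟨rfl, i0, hi0, rfl, rfl⟩ | ⟨rfl, t, ht, rfl, rfl⟩
    · -- read a
      refine Or.inr (Or.inl ⟨q', i - 1, j, ?_, ?_⟩)
      · rw [ab_glue_a0]; congr 2; omega
      · have hs : A.Step (Conf.state q (ab i0 0 ++ Letter.a :: ab (i + Δi - i0 - 1) (j + Δj)))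
            (Conf.state q' (ab i0 0 ++ ab (i + Δi - i0 - 1) (j + Δj))) :=
          RNFAwtw.Step.read hin hq
        rw [ab_glue_a, ab_glue_a0] at hs
        rw [show i0 + (i + Δi - i0 - 1) + 1 = i + Δi by omega,
          show i0 + (i + Δi - i0 - 1) = i - 1 + Δi by omega] at hs
        exact hs
    · -- read b
      have hin' : InStar (A.tl q) (ab (i + Δi) t) := by
        rcases hi with rfl | hi
        · simpa using hin
        · exact instar_shift_a A hin hi hdi
      refine Or.inr (Or.inl ⟨q', i, j - 1, ?_, ?_⟩)
      · rw [ab_glue_b0]; congr 2; omega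
      · have hs : A.Step
            (Conf.state q (ab (i + Δi) t ++ Letter.b :: ab 0 (j + Δj - t - 1)))
            (Conf.state q' (ab (i + Δi) t ++ ab 0 (j + Δj - t - 1))) :=
          RNFAwtw.Step.read hin' hq
        rw [ab_glue_b, ab_glue_b0] at hs
        rw [show t + (j + Δj - t - 1) + 1 = j + Δj by omega,
          show t + (j + Δj - t - 1) = j - 1 + Δj by omega] at hs
        exact hs
  · exact Or.inr (Or.inr rfl)
  · exact Or.inl ⟨rfl, RNFAwtw.Step.haltAccept (instar_shift A hin hi hj hdi hdj) he⟩
  · exact Or.inr (Or.inr rfl)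
  · exact Or.inr (Or.inl ⟨q', i, j, rfl,
      RNFAwtw.Step.goOn (instar_shift A hin hi hj hdi hdj) he hq⟩)

end Automaton

end AuxWtw

namespace AuxWtw

open List

section Automaton

variable {Q : Type} [Fintype Q] (A : RNFAwtw Letter Q)

theorem ab_ne_nil {i j : ℕ} (h : 1 ≤ i + j) : ab i j ≠ [] := by
  intro he
  have := congrArg List.length he
  simp [ab_length] at this
  omega

theorem excl_read_a_instar {q : Q} {i j : ℕ}
    (hne : (A.delta q Letter.a).Nonempty) (hi : 1 ≤ i)
    (hin : InStar (A.tl q) (ab i j)) : False := by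
  rw [show i = (i - 1) + 1 by omega, ab_cons_a] at hin
  exact not_instar_cons A hne hin

theorem excl_read_b_instar {q : Q} {i j t : ℕ}
    (hne : (A.delta q Letter.b).Nonempty) (ht : t < j)
    (hu : InStar (A.tl q) (ab i t)) (hin : InStar (A.tl q) (ab i j)) : False := by
  have hz : InStar (A.tl q) (ab 0 (j - t)) := by
    refine instar_drop' A hu hin ?_
    rw [ab_glue_b0]
    congr 1
    omega
  rw [show j - t = (j - t - 1) + 1 by omega, ab_cons_b] at hz
  exact not_instar_cons A hne hz

theorem excl_instar_stuck {q : Q} {w u v : List Letter} {x : Letter}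
    (hin : InStar (A.tl q) u) (hw : w = u ++ x :: v) (hinw : InStar (A.tl q) w)
    (hnp : ∀ t ∈ A.tl q, ¬ t <+: (x :: v)) : False := by
  have hz := instar_drop' A hin hinw hw.symm
  obtain ⟨t0, ht0, hne, hpre⟩ := instar_head (A.code_ne q) hz (List.cons_ne_nil _ _)
  exact hnp t0 ht0 hpre

theorem excl_read_b_stuck_a {q : Q} {i j t i0 : ℕ}
    (ht : t < j) (hu : InStar (A.tl q) (ab i t))
    (hi0 : i0 < i) (hu' : InStar (A.tl q) (ab i0 0))
    (hnp : ∀ t0 ∈ A.tl q, ¬ t0 <+: (Letter.a :: ab (i - i0 - 1) j)) : False := by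
  have hz : InStar (A.tl q) (ab (i - i0) t) := by
    refine instar_drop' A hu' hu ?_
    rw [ab_glue_a0]
    congr 2
    omega
  obtain ⟨t0, ht0, -, hpre⟩ := instar_head (A.code_ne q) hz (ab_ne_nil (by omega))
  refine hnp t0 ht0 ?_
  have h2 : i - i0 - 1 + 1 = i - i0 := by omega
  have h1 : (Letter.a :: ab (i - i0 - 1) j) = ab (i - i0) j := by
    rw [← ab_cons_a, h2]
  rw [h1]
  exact hpre.trans (ab_prefix_mono (by omega))

/-- Determinism: at most one successor of a configuration `(q, a^i b^j)`. -/
theorem step_unique (hdet : A.Deterministic) {q : Q} {i j : ℕ} {c c' : Conf Letter Q}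
    (h1 : A.Step (Conf.state q (ab i j)) c) (h2 : A.Step (Conf.state q (ab i j)) c') :
    c = c' := by
  obtain ⟨-, hsub, hcont⟩ := hdet
  rcases step_inv A h1 with
    ⟨q1, x1, u1, v1, hin1, hq1, hw1, rfl⟩ | ⟨x1, u1, v1, hin1, hd1, hnp1, hw1, rfl⟩ |
    ⟨hin1, he1, rfl⟩ | ⟨hin1, he1, rfl⟩ | ⟨q1, S1, hin1, he1, hm1, rfl⟩ <;>
  rcases step_inv A h2 with
    ⟨q2, x2, u2, v2, hin2, hq2, hw2, rfl⟩ | ⟨x2, u2, v2, hin2, hd2, hnp2, hw2, rfl⟩ |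
    ⟨hin2, he2, rfl⟩ | ⟨hin2, he2, rfl⟩ | ⟨q2, S2, hin2, he2, hm2, rfl⟩
  · -- read / read
    rcases decomp hw1.symm with ⟨rfl, i0, hi0, rfl, rfl⟩ | ⟨rfl, t1, ht1, rfl, rfl⟩ <;>
      rcases decomp hw2.symm with ⟨he2', i0', hi0', hu2, hv2⟩ | ⟨he2', t2, ht2, hu2, hv2⟩
    · subst he2'
      have hq : q1 = q2 := hsub q Letter.a hq1 hq2
      have hw : ab i0 0 ++ ab (i - i0 - 1) j = u2 ++ v2 := by
        rw [hu2, hv2, ab_glue_a0, ab_glue_a0,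
          show i0 + (i - i0 - 1) = i - 1 by omega, show i0' + (i - i0' - 1) = i - 1 by omega]
      rw [hq, hw]
    · exact (excl_read_a_instar A ⟨q1, hq1⟩ (by omega) (hu2 ▸ hin2)).elim
    · subst he2'
      exact (excl_read_a_instar A ⟨q2, hq2⟩ (by omega) hin1).elim
    · subst he2'
      have hq : q1 = q2 := hsub q Letter.b hq1 hq2
      have hw : ab i t1 ++ ab 0 (j - t1 - 1) = u2 ++ v2 := by
        rw [hu2, hv2, ab_glue_b0, ab_glue_b0,
          show t1 + (j - t1 - 1) = j - 1 by omega, show t2 + (j - t2 - 1) = j - 1 by omega]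
      rw [hq, hw]
  · -- read / stuck
    rcases decomp hw1.symm with ⟨rfl, i0, hi0, rfl, rfl⟩ | ⟨rfl, t1, ht1, rfl, rfl⟩ <;>
      rcases decomp hw2.symm with ⟨he2', i0', hi0', hu2, hv2⟩ | ⟨he2', t2, ht2, hu2, hv2⟩
    · subst he2'
      rw [hd2] at hq1
      exact absurd hq1 (Set.notMem_empty _)
    · exact (excl_read_a_instar A ⟨q1, hq1⟩ (by omega) (hu2 ▸ hin2)).elim
    · subst he2'
      exact (excl_read_b_stuck_a A ht1 hin1 hi0' (hu2 ▸ hin2) (hv2 ▸ hnp2)).elim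
    · subst he2'
      rw [hd2] at hq1
      exact absurd hq1 (Set.notMem_empty _)
  · -- read / haltAccept
    rcases decomp hw1.symm with ⟨rfl, i0, hi0, rfl, rfl⟩ | ⟨rfl, t1, ht1, rfl, rfl⟩
    · exact (excl_read_a_instar A ⟨q1, hq1⟩ (by omega) hin2).elim
    · exact (excl_read_b_instar A ⟨q1, hq1⟩ ht1 hin1 hin2).elim
  · -- read / haltReject
    rcases decomp hw1.symm with ⟨rfl, i0, hi0, rfl, rfl⟩ | ⟨rfl, t1, ht1, rfl, rfl⟩
    · exact (excl_read_a_instar A ⟨q1, hq1⟩ (by omega) hin2).elim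
    · exact (excl_read_b_instar A ⟨q1, hq1⟩ ht1 hin1 hin2).elim
  · -- read / goOn
    rcases decomp hw1.symm with ⟨rfl, i0, hi0, rfl, rfl⟩ | ⟨rfl, t1, ht1, rfl, rfl⟩
    · exact (excl_read_a_instar A ⟨q1, hq1⟩ (by omega) hin2).elim
    · exact (excl_read_b_instar A ⟨q1, hq1⟩ ht1 hin1 hin2).elim
  · -- stuck / read
    rcases decomp hw2.symm with ⟨rfl, i0, hi0, hu2, hv2⟩ | ⟨rfl, t2, ht2, hu2, hv2⟩ <;>
      rcases decomp hw1.symm with ⟨he1', i0', hi0', hu1, hv1⟩ | ⟨he1', t1, ht1, hu1, hv1⟩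
    · subst he1'
      rw [hd1] at hq2
      exact absurd hq2 (Set.notMem_empty _)
    · subst he1'
      exact (excl_read_a_instar A ⟨q2, hq2⟩ (by omega) (hu1 ▸ hin1)).elim
    · subst he1'
      exact (excl_read_b_stuck_a A ht2 (hu2 ▸ hin2) hi0' (hu1 ▸ hin1) (hv1 ▸ hnp1)).elim
    · subst he1'
      rw [hd1] at hq2
      exact absurd hq2 (Set.notMem_empty _)
  · rfl
  · exact (excl_instar_stuck A hin1 hw1 hin2 hnp1).elim
  · rfl
  · exact (excl_instar_stuck A hin1 hw1 hin2 hnp1).elim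
  · -- haltAccept / read
    rcases decomp hw2.symm with ⟨rfl, i0, hi0, hu2, hv2⟩ | ⟨rfl, t2, ht2, hu2, hv2⟩
    · exact (excl_read_a_instar A ⟨q2, hq2⟩ (by omega) hin1).elim
    · exact (excl_read_b_instar A ⟨q2, hq2⟩ ht2 (hu2 ▸ hin2) hin1).elim
  · exact (excl_instar_stuck A hin2 hw2 hin1 hnp2).elim
  · rfl
  · rw [he1] at he2; cases he2
  · rw [he1] at he2; cases he2
  · -- haltReject / read
    rcases decomp hw2.symm with ⟨rfl, i0, hi0, hu2, hv2⟩ | ⟨rfl, t2, ht2, hu2, hv2⟩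
    · exact (excl_read_a_instar A ⟨q2, hq2⟩ (by omega) hin1).elim
    · exact (excl_read_b_instar A ⟨q2, hq2⟩ ht2 (hu2 ▸ hin2) hin1).elim
  · rfl
  · rw [he1] at he2; cases he2
  · rfl
  · rw [he1] at he2; cases he2
  · -- goOn / read
    rcases decomp hw2.symm with ⟨rfl, i0, hi0, hu2, hv2⟩ | ⟨rfl, t2, ht2, hu2, hv2⟩
    · exact (excl_read_a_instar A ⟨q2, hq2⟩ (by omega) hin1).elim
    · exact (excl_read_b_instar A ⟨q2, hq2⟩ ht2 (hu2 ▸ hin2) hin1).elim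
  · exact (excl_instar_stuck A hin2 hw2 hin1 hnp2).elim
  · rw [he1] at he2; cases he2
  · rw [he1] at he2; cases he2
  · -- goOn / goOn
    rw [he1] at he2
    obtain rfl : S1 = S2 := by injection he2
    obtain ⟨q0, rfl⟩ := hcont q S1 he1
    have h1 : q1 = q0 := hm1
    have h2 : q2 = q0 := hm2
    rw [h1, h2]

end Automaton

end AuxWtw

namespace AuxWtw

open List

section Automaton

variable {Q : Type} [Fintype Q] (A : RNFAwtw Letter Q)

/-- A configuration `(q, a^i b^j)`. -/
def confp (p : Q × ℕ × ℕ) : Conf Letter Q := Conf.state p.1 (ab p.2.1 p.2.2)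

theorem confp_eq_state {p : Q × ℕ × ℕ} {q : Q} {i j : ℕ}
    (h : confp p = Conf.state q (ab i j)) : p.1 = q ∧ p.2.1 = i ∧ p.2.2 = j := by
  rw [confp] at h
  obtain ⟨h1, h2⟩ := Conf.state.inj h
  obtain ⟨h3, h4⟩ := ab_inj h2
  exact ⟨h1, h3, h4⟩

theorem confp_inj {p p' : Q × ℕ × ℕ} (h : confp p = confp p') : p = p' := by
  obtain ⟨h1, h2, h3⟩ := confp_eq_state (p := p) (q := p'.1) (i := p'.2.1) (j := p'.2.2) h
  exact Prod.ext h1 (Prod.ext h2 h3)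

/-- An accepting trace: a sequence of `(q, a^i b^j)` configurations ending at `Accept`. -/
def IsTrace (f : ℕ → Q × ℕ × ℕ) (T : ℕ) : Prop :=
  (∀ t, t < T → A.Step (confp (f t)) (confp (f (t + 1)))) ∧
    A.Step (confp (f T)) Conf.accept

theorem reject_not_accept : ¬ Relation.ReflTransGen A.Step Conf.reject Conf.accept := by
  intro h
  rcases Relation.ReflTransGen.cases_head h with heq | ⟨c, hstep, -⟩
  · simp [confp] at heq
  · cases hstep

theorem accepts_to_trace {p : Q × ℕ × ℕ}
    (h : Relation.ReflTransGen A.Step (confp p) Conf.accept) :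
    ∃ T f, f 0 = p ∧ IsTrace A f T := by
  suffices H : ∀ c, Relation.ReflTransGen A.Step c Conf.accept →
      ∀ p, c = confp p → ∃ T f, f 0 = p ∧ IsTrace A f T from H _ h p rfl
  intro c hc
  induction hc using Relation.ReflTransGen.head_induction_on with
  | refl =>
    intro p hp
    simp [confp] at hp
  | head hstep htail ih =>
    intro p hp
    subst hp
    rcases step_cases A (i := p.2.1) (j := p.2.2) (q := p.1) hstep with
      hacc | hrej | ⟨q', hc', hi⟩ | ⟨q', hc', hj⟩ | ⟨q', hc'⟩
    · refine ⟨0, fun _ => p, rfl, fun t ht => absurd ht (by omega), ?_⟩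
      rwa [hacc] at hstep
    · rw [hrej] at htail
      exact absurd htail (reject_not_accept A)
    · obtain ⟨T, f, hf0, htr⟩ := ih (q', p.2.1 - 1, p.2.2) (by rw [hc']; rfl)
      refine ⟨T + 1, fun t => Nat.casesOn t p f, rfl, ?_, htr.2⟩
      intro t ht
      cases t with
      | zero =>
        show A.Step (confp p) (confp (f 0))
        rw [hf0]
        show A.Step (confp p) (Conf.state q' (ab (p.2.1 - 1) p.2.2))
        rw [← hc']
        exact hstep
      | succ t' => exact htr.1 t' (by omega)
    · obtain ⟨T, f, hf0, htr⟩ := ih (q', p.2.1, p.2.2 - 1) (by rw [hc']; rfl)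
      refine ⟨T + 1, fun t => Nat.casesOn t p f, rfl, ?_, htr.2⟩
      intro t ht
      cases t with
      | zero =>
        show A.Step (confp p) (confp (f 0))
        rw [hf0]
        show A.Step (confp p) (Conf.state q' (ab p.2.1 (p.2.2 - 1)))
        rw [← hc']
        exact hstep
      | succ t' => exact htr.1 t' (by omega)
    · obtain ⟨T, f, hf0, htr⟩ := ih (q', p.2.1, p.2.2) (by rw [hc']; rfl)
      refine ⟨T + 1, fun t => Nat.casesOn t p f, rfl, ?_, htr.2⟩
      intro t ht
      cases t with
      | zero =>
        show A.Step (confp p) (confp (f 0))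
        rw [hf0]
        show A.Step (confp p) (Conf.state q' (ab p.2.1 p.2.2))
        rw [← hc']
        exact hstep
      | succ t' => exact htr.1 t' (by omega)

theorem step_coord {p p' : Q × ℕ × ℕ} (h : A.Step (confp p) (confp p')) :
    (p'.2.1 ≤ p.2.1 ∧ p.2.1 ≤ p'.2.1 + 1) ∧ (p'.2.2 ≤ p.2.2 ∧ p.2.2 ≤ p'.2.2 + 1) := by
  rcases step_cases A (i := p.2.1) (j := p.2.2) (q := p.1) h with
    hacc | hrej | ⟨q', hc', hi⟩ | ⟨q', hc', hj⟩ | ⟨q', hc'⟩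
  · simp [confp] at hacc
  · simp [confp] at hrej
  · obtain ⟨-, h2, h3⟩ := confp_eq_state hc'
    omega
  · obtain ⟨-, h2, h3⟩ := confp_eq_state hc'
    omega
  · obtain ⟨-, h2, h3⟩ := confp_eq_state hc'
    omega

theorem trace_bound {f : ℕ → Q × ℕ × ℕ} {T : ℕ} (htr : IsTrace A f T) :
    ∀ s d, s + d ≤ T →
      ((f (s + d)).2.1 ≤ (f s).2.1 ∧ (f s).2.1 ≤ (f (s + d)).2.1 + d) ∧
      ((f (s + d)).2.2 ≤ (f s).2.2 ∧ (f s).2.2 ≤ (f (s + d)).2.2 + d) := by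
  intro s d
  induction d with
  | zero => intro _; rw [Nat.add_zero]; omega
  | succ d' ih =>
    intro hd
    have h1 := ih (by omega)
    have h2 := step_coord A (htr.1 (s + d') (by omega))
    have he : s + (d' + 1) = (s + d') + 1 := by omega
    rw [he]
    omega

theorem trace_rtg_end {f : ℕ → Q × ℕ × ℕ} {T : ℕ} (htr : IsTrace A f T) :
    ∀ d s, s + d = T → Relation.ReflTransGen A.Step (confp (f s)) Conf.accept := by
  intro d
  induction d with
  | zero =>
    intro s hs
    rw [show s = T by omega]
    exact Relation.ReflTransGen.single htr.2
  | succ d' ih =>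
    intro s hs
    exact Relation.ReflTransGen.head (htr.1 s (by omega)) (ih (s + 1) (by omega))

/-- Shifted replay of a trace segment. -/
theorem trace_shift_seg {f : ℕ → Q × ℕ × ℕ} {T : ℕ} (htr : IsTrace A f T)
    {Δi Δj : ℕ} (hdi : PP A ∣ Δi) (hdj : PP A ∣ Δj) (s : ℕ) {E : ℕ} (hET : E ≤ T)
    (hcond : ∀ t, s ≤ t → t < E → (Δi = 0 ∨ T0v A ≤ (f t).2.1) ∧ (Δj = 0 ∨ T0v A ≤ (f t).2.2)) :
    ∀ d, s + d ≤ E →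
      Relation.ReflTransGen A.Step (confp ((f s).1, (f s).2.1 + Δi, (f s).2.2 + Δj))
        (confp ((f (s + d)).1, (f (s + d)).2.1 + Δi, (f (s + d)).2.2 + Δj)) := by
  intro d
  induction d with
  | zero => intro _; exact Relation.ReflTransGen.refl
  | succ d' ih =>
    intro hd
    refine Relation.ReflTransGen.tail (ih (by omega)) ?_
    have hst := htr.1 (s + d') (by omega)
    have hcnd := hcond (s + d') (by omega) (by omega)
    rcases step_shift A hdi hdj hcnd.1 hcnd.2 hst with
      ⟨hacc, -⟩ | ⟨q', i', j', heq, hstep⟩ | hrej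
    · simp [confp] at hacc
    · obtain ⟨h1, h2, h3⟩ := confp_eq_state heq
      have he : s + (d' + 1) = (s + d') + 1 := by omega
      rw [he]
      show A.Step _ (confp ((f (s + d' + 1)).1, (f (s + d' + 1)).2.1 + Δi,
        (f (s + d' + 1)).2.2 + Δj))
      rw [show ((f (s + d' + 1)).1, (f (s + d' + 1)).2.1 + Δi, (f (s + d' + 1)).2.2 + Δj)
        = (q', i' + Δi, j' + Δj) by rw [h1, h2, h3]]
      exact hstep
    · simp [confp] at hrej

/-- Shifted replay of a whole accepting trace. -/
theorem trace_shift_accept {f : ℕ → Q × ℕ × ℕ} {T : ℕ} (htr : IsTrace A f T)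
    {Δi Δj : ℕ} (hdi : PP A ∣ Δi) (hdj : PP A ∣ Δj)
    (hcond : ∀ t, t ≤ T → (Δi = 0 ∨ T0v A ≤ (f t).2.1) ∧ (Δj = 0 ∨ T0v A ≤ (f t).2.2)) :
    Relation.ReflTransGen A.Step (confp ((f 0).1, (f 0).2.1 + Δi, (f 0).2.2 + Δj))
      Conf.accept := by
  have hseg := trace_shift_seg A htr hdi hdj 0 (le_refl T)
    (fun t h1 h2 => hcond t (by omega)) T (by omega)
  refine Relation.ReflTransGen.tail (by simpa using hseg) ?_
  have hcnd := hcond T (le_refl T)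
  rcases step_shift A hdi hdj hcnd.1 hcnd.2 htr.2 with
    ⟨-, hstep⟩ | ⟨q', i', j', heq, -⟩ | hrej
  · exact hstep
  · simp [confp] at heq
  · simp [confp] at hrej

/-- Deterministic lockstep: two traces whose start configurations differ by
`(0, n)` with `P ∣ n` agree (up to the shift) while the `b`-coordinate stays large. -/
theorem lockstep (hdet : A.Deterministic) {f1 f2 : ℕ → Q × ℕ × ℕ} {T1 T2 : ℕ}
    (htr1 : IsTrace A f1 T1) (htr2 : IsTrace A f2 T2) {n : ℕ} (hdn : PP A ∣ n)
    (h0 : f2 0 = ((f1 0).1, (f1 0).2.1, (f1 0).2.2 + n)) {K : ℕ}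
    (hK1 : K ≤ T1) (hK2 : K ≤ T2)
    (hcond : ∀ t, t < K → T0v A ≤ (f1 t).2.2) :
    ∀ t, t ≤ K → f2 t = ((f1 t).1, (f1 t).2.1, (f1 t).2.2 + n) := by
  intro t
  induction t with
  | zero => intro _; exact h0
  | succ t' ih =>
    intro ht
    have hprev := ih (by omega)
    have hst1 := htr1.1 t' (by omega)
    rcases step_shift A (Δi := 0) (Δj := n) (dvd_zero _) hdn (Or.inl rfl)
      (Or.inr (hcond t' (by omega))) hst1 with
      ⟨hacc, -⟩ | ⟨q', i', j', heq, hstep⟩ | hrej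
    · simp [confp] at hacc
    · obtain ⟨h1, h2, h3⟩ := confp_eq_state heq
      have hst2 := htr2.1 t' (by omega)
      have hsrc : confp (f2 t') = confp ((f1 t').1, (f1 t').2.1 + 0, (f1 t').2.2 + n) := by
        rw [hprev]; norm_num
      rw [hsrc] at hst2
      have := step_unique A hdet hst2 hstep
      have h4 : confp (f2 (t' + 1)) = confp (q', i' + 0, j' + n) := this
      have h5 := confp_inj h4
      rw [h5, ← h1, ← h2, ← h3]
      norm_num
    · simp [confp] at hrej

end Automaton

end AuxWtw

namespace AuxWtw

open List

theorem lvee_ab {x y : ℕ} : ab x y ∈ Lvee ↔ (y = x ∨ y = 2 * x) := by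
  constructor
  · rintro ⟨m, hm, hy⟩
    rw [count_ab_a] at hm
    rw [count_ab_b] at hy
    subst hm
    exact hy
  · intro h
    exact ⟨x, count_ab_a x y, by rwa [count_ab_b]⟩

theorem part3 : ¬ AcceptedByRDFAwtw Lvee := by
  rintro ⟨Q, hFinQ, A, hdet, hlang⟩
  have : Fintype Q := Fintype.ofFinite Q
  classical
  obtain ⟨q0, hq0⟩ := hdet.1
  have hP : 1 ≤ PP A := PP_pos A
  set N : ℕ := Fintype.card Q * PP A * PP A with hN
  set n : ℕ := PP A * (N + T0v A + PP A + 2) with hn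
  have hPn : PP A ∣ n := ⟨_, rfl⟩
  have hnge : N + T0v A + PP A + 2 ≤ n := Nat.le_mul_of_pos_left _ (by omega)
  -- accepted words give accepting traces from q0
  have haccept : ∀ x y : ℕ, (y = x ∨ y = 2 * x) →
      Relation.ReflTransGen A.Step (confp ((q0, x, y) : Q × ℕ × ℕ)) Conf.accept := by
    intro x y h
    have hL : ab x y ∈ A.lang := by rw [hlang]; exact lvee_ab.mpr h
    obtain ⟨q0', hq0', hrtg⟩ := hL
    rw [hq0] at hq0'
    rw [Set.mem_singleton_iff] at hq0'
    subst hq0'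
    exact hrtg
  have hacc_of : ∀ x y : ℕ,
      Relation.ReflTransGen A.Step (confp ((q0, x, y) : Q × ℕ × ℕ)) Conf.accept →
      (y = x ∨ y = 2 * x) := by
    intro x y h
    have : ab x y ∈ A.lang := ⟨q0, by rw [hq0]; exact Set.mem_singleton _, h⟩
    rw [hlang] at this
    exact lvee_ab.mp this
  -- traces for a^n b^n and a^n b^{2n}
  obtain ⟨T1, f1, hf10, htr1⟩ := accepts_to_trace A (p := (q0, n, n))
    (haccept n n (Or.inl rfl))
  obtain ⟨T2, f2, hf20, htr2⟩ := accepts_to_trace A (p := (q0, n, 2 * n))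
    (haccept n (2 * n) (Or.inr rfl))
  -- basic coordinate bounds
  have hb1 := trace_bound A htr1
  have hb2 := trace_bound A htr2
  -- tails must be small
  have tail : ∀ (f : ℕ → Q × ℕ × ℕ) (T x y : ℕ), IsTrace A f T → f 0 = (q0, x, y) →
      ((T0v A ≤ (f T).2.1 → (y = x + PP A ∨ y = 2 * (x + PP A))) ∧
       (T0v A ≤ (f T).2.2 → (y + PP A = x ∨ y + PP A = 2 * x))) := by
    intro f T x y htr hf0
    have hb := trace_bound A htr
    constructor
    · intro hT
      have hcond : ∀ t, t ≤ T →
          (PP A = 0 ∨ T0v A ≤ (f t).2.1) ∧ ((0:ℕ) = 0 ∨ T0v A ≤ (f t).2.2) := by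
        intro t ht
        refine ⟨Or.inr ?_, Or.inl rfl⟩
        have := hb t (T - t) (by omega)
        have he : t + (T - t) = T := by omega
        rw [he] at this
        omega
      have := trace_shift_accept A htr (Δi := PP A) (Δj := 0) (dvd_refl _) (dvd_zero _) hcond
      rw [hf0] at this
      have h2 := hacc_of (x + PP A) (y + 0) (by simpa using this)
      simpa using h2
    · intro hT
      have hcond : ∀ t, t ≤ T →
          ((0:ℕ) = 0 ∨ T0v A ≤ (f t).2.1) ∧ (PP A = 0 ∨ T0v A ≤ (f t).2.2) := by
        intro t ht
        refine ⟨Or.inl rfl, Or.inr ?_⟩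
        have := hb t (T - t) (by omega)
        have he : t + (T - t) = T := by omega
        rw [he] at this
        omega
      have := trace_shift_accept A htr (Δi := 0) (Δj := PP A) (dvd_zero _) (dvd_refl _) hcond
      rw [hf0] at this
      have h2 := hacc_of (x + 0) (y + PP A) (by simpa using this)
      simpa using h2
  have htail1 := tail f1 T1 n n htr1 hf10
  have htail2 := tail f2 T2 n (2 * n) htr2 hf20
  have hiT1 : (f1 T1).2.1 < T0v A := by
    by_contra hc
    push_neg at hc
    have := htail1.1 hc
    omega
  have hjT1 : (f1 T1).2.2 < T0v A := by
    by_contra hc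
    push_neg at hc
    have := htail1.2 hc
    omega
  have hiT2 : (f2 T2).2.1 < T0v A := by
    by_contra hc
    push_neg at hc
    have := htail2.1 hc
    omega
  have hjT2 : (f2 T2).2.2 < T0v A := by
    by_contra hc
    push_neg at hc
    have := htail2.2 hc
    omega
  -- the traces are long
  have hT1 : N + 2 ≤ T1 := by
    have := hb1 0 T1 (by omega)
    rw [Nat.zero_add, hf10] at this
    simp at this
    omega
  have hT2 : N + 2 ≤ T2 := by
    have := hb2 0 T2 (by omega)
    rw [Nat.zero_add, hf20] at this
    simp at this
    omega
  -- coordinates stay large during the first N+1 steps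
  have hlarge1 : ∀ t, t ≤ N + 1 → T0v A ≤ (f1 t).2.1 ∧ T0v A ≤ (f1 t).2.2 := by
    intro t ht
    have := hb1 0 t (by omega)
    rw [Nat.zero_add, hf10] at this
    simp at this
    omega
  have hlarge2 : ∀ t, t ≤ N + 1 → T0v A ≤ (f2 t).2.1 ∧ T0v A ≤ (f2 t).2.2 := by
    intro t ht
    have := hb2 0 t (by omega)
    rw [Nat.zero_add, hf20] at this
    simp at this
    omega
  -- lockstep of the two traces
  have hlock := lockstep A hdet htr1 htr2 hPn
    (by rw [hf10, hf20]; simp [two_mul]) (K := N + 1) (by omega) (by omega)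
    (fun t ht => (hlarge1 t (by omega)).2)
  -- pigeonhole
  have hPne : NeZero (PP A) := ⟨by omega⟩
  have hcard : Fintype.card (Q × ZMod (PP A) × ZMod (PP A)) = N := by
    simp [ZMod.card, hN]
    ring
  obtain ⟨s', hs', e', he', hne, heq⟩ :=
    Finset.exists_ne_map_eq_of_card_lt_of_maps_to
      (s := Finset.range (N + 2))
      (t := (Finset.univ : Finset (Q × ZMod (PP A) × ZMod (PP A))))
      (by rw [Finset.card_range, Finset.card_univ, hcard]; omega)
      (fun t _ => Finset.mem_univ
        (((f1 t).1, ((f1 t).2.1 : ZMod (PP A)), ((f1 t).2.2 : ZMod (PP A)))))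
  rw [Finset.mem_range] at hs' he'
  -- order the repeated pair
  obtain ⟨s, e, hse, hsN, heN, hqe, hie, hje⟩ :
      ∃ s e, s < e ∧ s ≤ N + 1 ∧ e ≤ N + 1 ∧ (f1 s).1 = (f1 e).1 ∧
        ((f1 s).2.1 : ZMod (PP A)) = ((f1 e).2.1 : ZMod (PP A)) ∧
        ((f1 s).2.2 : ZMod (PP A)) = ((f1 e).2.2 : ZMod (PP A)) := by
    rw [Prod.mk.injEq, Prod.mk.injEq] at heq
    obtain ⟨h1, h2, h3⟩ := heq
    rcases lt_or_gt_of_ne hne with hlt | hgt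
    · exact ⟨s', e', hlt, by omega, by omega, h1, h2, h3⟩
    · exact ⟨e', s', hgt, by omega, by omega, h1.symm, h2.symm, h3.symm⟩
  -- the consumption of the repeated segment
  have hmono1 := hb1 s (e - s) (by omega)
  rw [show s + (e - s) = e by omega] at hmono1
  set α : ℕ := (f1 s).2.1 - (f1 e).2.1 with hα
  set β : ℕ := (f1 s).2.2 - (f1 e).2.2 with hβ
  have hie' : (f1 e).2.1 ≤ (f1 s).2.1 := hmono1.1.1
  have hje' : (f1 e).2.2 ≤ (f1 s).2.2 := hmono1.2.1
  have hαd : PP A ∣ α := by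
    have hm : (f1 e).2.1 ≡ (f1 s).2.1 [MOD PP A] :=
      (ZMod.natCast_eq_natCast_iff _ _ _).mp hie.symm
    exact (Nat.modEq_iff_dvd' hie').mp hm
  have hβd : PP A ∣ β := by
    have hm : (f1 e).2.2 ≡ (f1 s).2.2 [MOD PP A] :=
      (ZMod.natCast_eq_natCast_iff _ _ _).mp hje.symm
    exact (Nat.modEq_iff_dvd' hje').mp hm
  have hαb : α ≤ N + 1 := by
    have := hmono1.1.2
    omega
  have hβb : β ≤ N + 1 := by
    have := hmono1.2.2
    omega
  -- pumping: insert one extra copy of the repeated segment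
  have pump : ∀ (f : ℕ → Q × ℕ × ℕ) (T x y : ℕ), IsTrace A f T → f 0 = (q0, x, y) →
      N + 2 ≤ T →
      (∀ t, t ≤ N + 1 → T0v A ≤ (f t).2.1 ∧ T0v A ≤ (f t).2.2) →
      (f s).1 = (f e).1 → (f s).2.1 - (f e).2.1 = α → (f s).2.2 - (f e).2.2 = β →
      (f e).2.1 ≤ (f s).2.1 → (f e).2.2 ≤ (f s).2.2 →
      (y + β = x + α ∨ y + β = 2 * (x + α)) := by
    intro f T x y htr hf0 hT hlarge hq hα' hβ' hii hjj
    have hcond : ∀ t, 0 ≤ t → t < e →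
        (α = 0 ∨ T0v A ≤ (f t).2.1) ∧ (β = 0 ∨ T0v A ≤ (f t).2.2) :=
      fun t _ ht => ⟨Or.inr (hlarge t (by omega)).1, Or.inr (hlarge t (by omega)).2⟩
    have R1 := trace_shift_seg A htr hαd hβd 0 (E := e) (by omega) hcond s (by omega)
    have R2 := trace_shift_seg A htr hαd hβd s (E := e) (by omega)
      (fun t h1 h2 => hcond t (by omega) h2) (e - s) (by omega)
    rw [show s + (e - s) = e by omega] at R2
    have R3 := trace_rtg_end A htr (T - s) s (by omega)
    have hend : ((f e).1, (f e).2.1 + α, (f e).2.2 + β) = f s := by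
      have h5 : ((f e).1, (f e).2.1 + α, (f e).2.2 + β)
          = ((f s).1, (f s).2.1, (f s).2.2) := by
        rw [Prod.mk.injEq, Prod.mk.injEq]
        exact ⟨hq.symm, by omega, by omega⟩
      exact h5
    rw [hend] at R2
    rw [Nat.zero_add] at R1
    rw [hf0] at R1
    have total := (R1.trans R2).trans R3
    exact hacc_of (x + α) (y + β) total
  have hp1 := pump f1 T1 n n htr1 hf10 hT1 hlarge1 hqe rfl rfl hie' hje'
  -- the same repeat occurs in the lockstepped trace f2
  have hl_s := hlock s (by omega)
  have hl_e := hlock e (by omega)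
  have hp2 := pump f2 T2 n (2 * n) htr2 hf20 hT2 hlarge2
    (by rw [hl_s, hl_e]; exact hqe)
    (by rw [hl_s, hl_e])
    (by rw [hl_s, hl_e]; show (f1 s).2.2 + n - ((f1 e).2.2 + n) = β; omega)
    (by rw [hl_s, hl_e]; exact hie')
    (by rw [hl_s, hl_e]; show (f1 e).2.2 + n ≤ (f1 s).2.2 + n; omega)
  -- arithmetic: the cycle is trivial
  have hT0pos : 1 ≤ T0v A := by rw [T0v]; omega
  have hab0 : α = 0 ∧ β = 0 := by
    rcases hp2 with h | h
    · omega
    · rcases hp1 with h1 | h1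
      · omega
      · omega
  -- exact repetition contradicts acceptance
  have hfse : f1 s = f1 e := by
    have h5 : ((f1 s).1, (f1 s).2.1, (f1 s).2.2) = ((f1 e).1, (f1 e).2.1, (f1 e).2.2) := by
      rw [Prod.mk.injEq, Prod.mk.injEq]
      exact ⟨hqe, by omega, by omega⟩
    exact h5
  have hprop : ∀ d, e + d ≤ T1 → f1 (s + d) = f1 (e + d) := by
    intro d
    induction d with
    | zero => intro _; simpa using hfse
    | succ d' ih =>
      intro hd
      have h1 := htr1.1 (s + d') (by omega)
      have h2 := htr1.1 (e + d') (by omega)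
      rw [ih (by omega)] at h1
      have h3 := step_unique A hdet h1 h2
      have h4 := confp_inj h3
      rw [show s + (d' + 1) = (s + d') + 1 by omega,
        show e + (d' + 1) = (e + d') + 1 by omega]
      exact h4
  have hfin := hprop (T1 - e) (by omega)
  rw [show e + (T1 - e) = T1 by omega] at hfin
  have hstep := htr1.1 (s + (T1 - e)) (by omega)
  rw [hfin] at hstep
  have hcontr := step_unique A hdet hstep htr1.2
  simp [confp] at hcontr

end AuxWtw
/-- The class of RDFAwtw languages is properly contained in the class of
RNFAwtw languages: every RDFAwtw language is an RNFAwtw language, and `L_∨`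
is an RNFAwtw language that is not an RDFAwtw language. -/
theorem RDFAwtw_lt_RNFAwtw :
    (∀ (α : Type), Finite α →
      ∀ L : Set (List α), AcceptedByRDFAwtw L → AcceptedByRNFAwtw L) ∧
    AcceptedByRNFAwtw Lvee ∧ ¬ AcceptedByRDFAwtw Lvee := by
  refine ⟨?_, AuxWtw.part2, AuxWtw.part3⟩
  rintro α _ L ⟨Q, hF, A, hd, hl⟩
  exact ⟨Q, hF, A, hl⟩
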